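/- arXiv:1808.07964 — 4 statements merged into one kernel-verified Lean document; each statement's English description precedes it below -/
import Mathlib

section
/- Let K, K1, K2, r1, r2 be nonnegative integers with K = K1 + K2, 0 ≤ r2 ≤ r1 ≤ K, K1 ≥ 1, and K2 ≥ 1. Then the sum over all integers s1, s2 with 0 ≤ s2 ≤ s1 of C(K1 - 1, s2)·C(K1 - s2, s1 - s2)·C(K2 - 1, r2 - s2)·C(K2 - r2 + s2, (r1 - r2) - (s1 - s2)) equals C(K - 2, r2)·C(K - r2, r1 - r2). -/
/-- Binomial coefficient on integers, with the convention `C(a,b) = 0` for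
`b < 0` or `b > a`. -/
def ch (a b : ℤ) : ℤ := if 0 ≤ b ∧ b ≤ a then (a.toNat).choose b.toNat else 0

lemma ch_eq_zero {a b : ℤ} (h : ¬(0 ≤ b ∧ b ≤ a)) : ch a b = 0 := by
  simp [ch, h]

lemma ch_ne_zero_bounds {a b : ℤ} (h : ch a b ≠ 0) : 0 ≤ b ∧ b ≤ a := by
  by_contra hc; exact h (ch_eq_zero hc)

lemma ch_eval {a b : ℤ} (ha : 0 ≤ a) (hb : 0 ≤ b) :
    ch a b = (a.toNat).choose b.toNat := by
  unfold ch
  split_ifs with h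
  · rfl
  · have : a.toNat < b.toNat := by omega
    rw [Nat.choose_eq_zero_of_lt this]; rfl

lemma finsum_eq_Icc (f : ℤ → ℤ) (lo hi : ℤ)
    (h : ∀ t : ℤ, f t ≠ 0 → lo ≤ t ∧ t ≤ hi) :
    ∑ᶠ t : ℤ, f t = ∑ t ∈ Finset.Icc lo hi, f t := by
  apply finsum_eq_finset_sum_of_support_subset
  intro t ht
  simp only [Finset.coe_Icc, Set.mem_Icc]
  exact h t ht

lemma natvand (m n B : ℕ) :
    ∑ k ∈ Finset.range (B + 1), ((m.choose k : ℤ) * n.choose (B - k))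
      = (m + n).choose B := by
  have h := Nat.add_choose_eq m n B
  rw [Finset.Nat.sum_antidiagonal_eq_sum_range_succ_mk] at h
  have h2 : (m + n).choose B
      = ∑ k ∈ Finset.range (B + 1), m.choose k * n.choose (B - k) := h
  exact_mod_cast h2.symm

lemma vand (m n : ℤ) (hm : 0 ≤ m) (hn : 0 ≤ n) (b : ℤ) :
    ∑ᶠ t : ℤ, ch m t * ch n (b - t) = ch (m + n) b := by
  rcases lt_or_ge b 0 with hb | hb
  · have h0 : ∀ t : ℤ, ch m t * ch n (b - t) = 0 := by
      intro t
      rcases lt_or_ge t 0 with h | h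
      · rw [ch_eq_zero (by omega), zero_mul]
      · rw [ch_eq_zero (a := n) (by omega), mul_zero]
    rw [finsum_congr h0, finsum_zero, ch_eq_zero (by omega)]
  · rw [finsum_eq_Icc _ 0 b (by
      intro t ht
      constructor
      · exact (ch_ne_zero_bounds (left_ne_zero_of_mul ht)).1
      · have h1 := (ch_ne_zero_bounds (right_ne_zero_of_mul ht)).1; omega)]
    have hbij : Finset.Icc (0 : ℤ) b
        = Finset.map ⟨(Nat.cast : ℕ → ℤ), Nat.cast_injective⟩
            (Finset.range (b.toNat + 1)) := by
      ext x
      simp only [Finset.mem_Icc, Finset.mem_map, Finset.mem_range,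
        Function.Embedding.coeFn_mk]
      constructor
      · rintro ⟨h1, h2⟩; exact ⟨x.toNat, by omega, by omega⟩
      · rintro ⟨k, hk, rfl⟩; omega
    rw [hbij, Finset.sum_map]
    simp only [Function.Embedding.coeFn_mk]
    have key : ∀ k ∈ Finset.range (b.toNat + 1),
        ch m (k : ℤ) * ch n (b - (k : ℤ))
          = (m.toNat.choose k : ℤ) * (n.toNat.choose (b.toNat - k) : ℤ) := by
      intro k hk
      simp only [Finset.mem_range] at hk
      rw [ch_eval hm (by positivity), ch_eval hn (by omega)]
      have e1 : ((k : ℤ)).toNat = k := by omega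
      have e2 : (b - (k : ℤ)).toNat = b.toNat - k := by omega
      rw [e1, e2]
    rw [Finset.sum_congr rfl key, natvand, ch_eval (by omega) hb]
    have e : (m + n).toNat = m.toNat + n.toNat := by omega
    rw [e]

/-- The summand of the double sum. -/
def Fs (K1 K2 r1 r2 s1 s2 : ℤ) : ℤ :=
  if 0 ≤ s2 ∧ s2 ≤ s1 then
    ch (K1 - 1) s2 * ch (K1 - s2) (s1 - s2) * ch (K2 - 1) (r2 - s2) *
      ch (K2 - r2 + s2) ((r1 - r2) - (s1 - s2))
  else 0

theorem stmt5 (K K1 K2 r1 r2 : ℤ) (hK : K = K1 + K2) (h0 : 0 ≤ r2)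
    (h12 : r2 ≤ r1) (h1K : r1 ≤ K) (hK1 : 1 ≤ K1) (hK2 : 1 ≤ K2) :
    (∑ᶠ s1 : ℤ, ∑ᶠ s2 : ℤ,
        if 0 ≤ s2 ∧ s2 ≤ s1 then
          ch (K1 - 1) s2 * ch (K1 - s2) (s1 - s2) * ch (K2 - 1) (r2 - s2) *
            ch (K2 - r2 + s2) ((r1 - r2) - (s1 - s2))
        else 0)
      = ch (K - 2) r2 * ch (K - r2) (r1 - r2) := by
  show (∑ᶠ s1 : ℤ, ∑ᶠ s2 : ℤ, Fs K1 K2 r1 r2 s1 s2)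
      = ch (K - 2) r2 * ch (K - r2) (r1 - r2)
  have hFzero : ∀ s1 s2 : ℤ, Fs K1 K2 r1 r2 s1 s2 ≠ 0 →
      0 ≤ s2 ∧ s2 ≤ r2 ∧ 0 ≤ s1 ∧ s1 ≤ K1 := by
    intro s1 s2 h
    unfold Fs at h
    split_ifs at h with hc
    case neg => exact absurd rfl h
    have h1 := ch_ne_zero_bounds (left_ne_zero_of_mul (left_ne_zero_of_mul
      (left_ne_zero_of_mul h)))
    have h2 := ch_ne_zero_bounds (right_ne_zero_of_mul (left_ne_zero_of_mul
      (left_ne_zero_of_mul h)))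
    have h3 := ch_ne_zero_bounds (right_ne_zero_of_mul (left_ne_zero_of_mul h))
    omega
  have step1 : (∑ᶠ s1 : ℤ, ∑ᶠ s2 : ℤ, Fs K1 K2 r1 r2 s1 s2)
      = ∑ s1 ∈ Finset.Icc (0 : ℤ) K1, ∑ s2 ∈ Finset.Icc (0 : ℤ) r2,
          Fs K1 K2 r1 r2 s1 s2 := by
    rw [finsum_eq_Icc _ 0 K1]
    · exact Finset.sum_congr rfl fun s1 _ => finsum_eq_Icc _ 0 r2
        (fun s2 h => ⟨(hFzero s1 s2 h).1, (hFzero s1 s2 h).2.1⟩)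
    · intro s1 h
      by_contra hc
      apply h
      have hz : ∀ s2 : ℤ, Fs K1 K2 r1 r2 s1 s2 = 0 := by
        intro s2
        by_contra h2
        exact hc ⟨(hFzero s1 s2 h2).2.2.1, (hFzero s1 s2 h2).2.2.2⟩
      rw [finsum_congr hz, finsum_zero]
  rw [step1, Finset.sum_comm]
  have step2 : ∀ s2 ∈ Finset.Icc (0 : ℤ) r2, ∀ s1 ∈ Finset.Icc (0 : ℤ) K1,
      Fs K1 K2 r1 r2 s1 s2 = (ch (K1 - 1) s2 * ch (K2 - 1) (r2 - s2)) *
        (ch (K1 - s2) (s1 - s2) * ch (K2 - r2 + s2) ((r1 - r2) - (s1 - s2))) := by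
    intro s2 hs2 s1 _
    simp only [Finset.mem_Icc] at hs2
    unfold Fs
    split_ifs with hc
    · ring
    · rw [ch_eq_zero (a := K1 - s2) (by omega)]
      ring
  calc ∑ s2 ∈ Finset.Icc (0:ℤ) r2, ∑ s1 ∈ Finset.Icc (0:ℤ) K1, Fs K1 K2 r1 r2 s1 s2
      = ∑ s2 ∈ Finset.Icc (0:ℤ) r2,
          (ch (K1 - 1) s2 * ch (K2 - 1) (r2 - s2)) * ch (K - r2) (r1 - r2) := by
        apply Finset.sum_congr rfl
        intro s2 hs2
        rw [Finset.sum_congr rfl (step2 s2 hs2), ← Finset.mul_sum]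
        simp only [Finset.mem_Icc] at hs2
        rcases eq_or_ne (ch (K1 - 1) s2 * ch (K2 - 1) (r2 - s2)) 0 with h | h
        · rw [h, zero_mul, zero_mul]
        · congr 1
          have hb1 := ch_ne_zero_bounds (left_ne_zero_of_mul h)
          have hb2 := ch_ne_zero_bounds (right_ne_zero_of_mul h)
          have hmap : ∑ s1 ∈ Finset.Icc (0:ℤ) K1,
              ch (K1 - s2) (s1 - s2) * ch (K2 - r2 + s2) ((r1 - r2) - (s1 - s2))
              = ∑ t ∈ Finset.Icc (0 + -s2) (K1 + -s2),
                  ch (K1 - s2) t * ch (K2 - r2 + s2) ((r1 - r2) - t) := by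
            rw [← Finset.map_add_right_Icc, Finset.sum_map]
            exact Finset.sum_congr rfl fun s1 _ => by
              simp [addRightEmbedding, sub_eq_add_neg]
          rw [hmap]
          rw [← finsum_eq_Icc _ (0 + -s2) (K1 + -s2) (by
            intro t ht
            have hb3 := ch_ne_zero_bounds (left_ne_zero_of_mul ht)
            omega)]
          rw [vand (K1 - s2) (K2 - r2 + s2) (by omega) (by omega) (r1 - r2)]
          congr 1
          omega
    _ = ch (K - 2) r2 * ch (K - r2) (r1 - r2) := by
        rw [← Finset.sum_mul]
        congr 1
        rw [← finsum_eq_Icc (fun s2 => ch (K1 - 1) s2 * ch (K2 - 1) (r2 - s2)) 0 r2 (by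
          intro t ht
          have hb1 := ch_ne_zero_bounds (left_ne_zero_of_mul ht)
          have hb2 := ch_ne_zero_bounds (right_ne_zero_of_mul ht)
          omega)]
        rw [vand (K1 - 1) (K2 - 1) (by omega) (by omega) r2]
        congr 1
        omega
end

section
/- Fix integers K ≥ 2 and i ≥ 1 with i ≤ K. Define c_n = C(K - i, n)/C(K, n) for n = 0, 1, ..., K (with C(a,b)=0 for b>a). Then the sequence c_n is convex, i.e., for all n with 0 ≤ n ≤ K - 2, c_{n+1} − c_n ≤ c_{n+2} − c_{n+1}. -/
set_option maxHeartbeats 1000000 in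
theorem stmt13 (K i : ℕ) (hK : 2 ≤ K) (hi1 : 1 ≤ i) (hi2 : i ≤ K) :
    ∀ n, n ≤ K - 2 →
      ((K - i).choose (n + 1) : ℚ) / (K.choose (n + 1))
          - ((K - i).choose n : ℚ) / (K.choose n)
        ≤ ((K - i).choose (n + 2) : ℚ) / (K.choose (n + 2))
          - ((K - i).choose (n + 1) : ℚ) / (K.choose (n + 1)) := by
  intro n hn
  set m := K - i with hm
  have hmK : m + 1 ≤ K := by omega
  have hn2 : n + 2 ≤ K := by omega
  rcases le_or_gt n m with hnm | hnm
  · -- n ≤ m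
    have hP0 : (0:ℚ) < (K.choose n : ℚ) := by exact_mod_cast Nat.choose_pos (by omega)
    have hP1 : (0:ℚ) < (K.choose (n+1) : ℚ) := by exact_mod_cast Nat.choose_pos (by omega)
    have hP2 : (0:ℚ) < (K.choose (n+2) : ℚ) := by exact_mod_cast Nat.choose_pos (by omega)
    have hQ0 : (0:ℚ) ≤ (m.choose n : ℚ) := by positivity
    have hA : ((K.choose (n+1) : ℚ)) * (n+1) = (K.choose n : ℚ) * ((K:ℚ) - n) := by
      have := Nat.choose_succ_right_eq K n
      have h' : ((K.choose (n+1) * (n+1) : ℕ) : ℚ) = ((K.choose n * (K - n) : ℕ) : ℚ) := by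
        exact_mod_cast congrArg (Nat.cast (R := ℚ)) this
      push_cast [Nat.cast_sub (by omega : n ≤ K)] at h'
      linarith [h']
    have hB : ((K.choose (n+2) : ℚ)) * (n+2) = (K.choose (n+1) : ℚ) * ((K:ℚ) - n - 1) := by
      have := Nat.choose_succ_right_eq K (n+1)
      have h' : ((K.choose (n+2) * (n+2) : ℕ) : ℚ) = ((K.choose (n+1) * (K - (n+1)) : ℕ) : ℚ) := by
        exact_mod_cast congrArg (Nat.cast (R := ℚ)) this
      push_cast [Nat.cast_sub (by omega : n + 1 ≤ K)] at h'
      linarith [h']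
    have ha : ((m.choose (n+1) : ℚ)) * (n+1) = (m.choose n : ℚ) * ((m:ℚ) - n) := by
      have := Nat.choose_succ_right_eq m n
      have h' : ((m.choose (n+1) * (n+1) : ℕ) : ℚ) = ((m.choose n * (m - n) : ℕ) : ℚ) := by
        exact_mod_cast congrArg (Nat.cast (R := ℚ)) this
      push_cast [Nat.cast_sub hnm] at h'
      linarith [h']
    have hb : ((m.choose (n+2) : ℚ)) * (n+2) = (m.choose (n+1) : ℚ) * ((m:ℚ) - n - 1) := by
      rcases eq_or_lt_of_le hnm with heq | hlt
      · subst heq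
        simp [Nat.choose_eq_zero_of_lt]
      · have := Nat.choose_succ_right_eq m (n+1)
        have h' : ((m.choose (n+2) * (n+2) : ℕ) : ℚ) = ((m.choose (n+1) * (m - (n+1)) : ℕ) : ℚ) := by
          exact_mod_cast congrArg (Nat.cast (R := ℚ)) this
        push_cast [Nat.cast_sub (by omega : n + 1 ≤ m)] at h'
        linarith [h']
    set a : ℚ := (m:ℚ) - n with hadef
    set A : ℚ := (K:ℚ) - n with hAdef
    set Q0 : ℚ := (m.choose n : ℚ)
    set P0 : ℚ := (K.choose n : ℚ)
    have hAn : (0:ℚ) < A := by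
      have : (n:ℚ) + 2 ≤ (K:ℚ) := by exact_mod_cast hn2
      simp only [hAdef]; linarith
    have hBn : (0:ℚ) < A - 1 := by
      have : (n:ℚ) + 2 ≤ (K:ℚ) := by exact_mod_cast hn2
      simp only [hAdef]; linarith
    have han : (0:ℚ) ≤ a := by
      have : (n:ℚ) ≤ (m:ℚ) := by exact_mod_cast hnm
      simp only [hadef]; linarith
    have hkey : a ≤ A - 1 := by
      have : (m:ℚ) + 1 ≤ (K:ℚ) := by exact_mod_cast hmK
      simp only [hadef, hAdef]; linarith
    have hn1 : (0:ℚ) < (n:ℚ) + 1 := by positivity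
    have hn2' : (0:ℚ) < (n:ℚ) + 2 := by positivity
    -- closed forms for the ratios
    have e1 : (m.choose (n+1) : ℚ) / (K.choose (n+1) : ℚ) = Q0 * a / (P0 * A) := by
      rw [div_eq_div_iff hP1.ne' (by positivity)]
      nlinarith [ha, hA, mul_pos hP0 hAn]
    have e2 : (m.choose (n+2) : ℚ) / (K.choose (n+2) : ℚ)
        = Q0 * a * (a - 1) / (P0 * A * (A - 1)) := by
      rw [div_eq_div_iff hP2.ne' (by positivity)]
      have hQ1 : (m.choose (n+1) : ℚ) = Q0 * a / ((n:ℚ)+1) := by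
        field_simp; linarith [ha]
      have hP1e : (K.choose (n+1) : ℚ) = P0 * A / ((n:ℚ)+1) := by
        field_simp; linarith [hA]
      rw [hQ1] at hb
      rw [hP1e] at hB
      have hQ2 : (m.choose (n+2) : ℚ) = Q0 * a * (a - 1) / (((n:ℚ)+1) * ((n:ℚ)+2)) := by
        field_simp at hb ⊢; linarith [hb]
      have hP2e : (K.choose (n+2) : ℚ) = P0 * A * (A - 1) / (((n:ℚ)+1) * ((n:ℚ)+2)) := by
        field_simp at hB ⊢; linarith [hB]
      rw [hQ2, hP2e]
      field_simp
    rw [e1, e2]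
    rw [div_sub_div _ _ (by positivity) hP0.ne',
        div_sub_div _ _ (by positivity) (by positivity),
        div_le_div_iff₀ (by positivity) (by positivity)]
    have h1 : (0:ℚ) ≤ A - a := by linarith
    have h2 : (0:ℚ) ≤ A - 1 - a := by linarith
    have hfac : (0:ℚ) ≤ Q0 * P0^3 * A^2 * ((A - a) * (A - 1 - a)) :=
      mul_nonneg (by positivity) (mul_nonneg h1 h2)
    nlinarith [hfac]
  · have h0 : m.choose n = 0 := Nat.choose_eq_zero_of_lt hnm
    have h1 : m.choose (n+1) = 0 := Nat.choose_eq_zero_of_lt (by omega)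
    have h2 : m.choose (n+2) = 0 := Nat.choose_eq_zero_of_lt (by omega)
    simp [h0, h1, h2]
end

section
/- Fix integers K ≥ 1 and 1 ≤ i ≤ K. Let a_0, ..., a_K be nonnegative reals with sum 1 and let t = Σ_{n=0}^K n·a_n. Then Σ_{n=0}^K a_n · C(K-i, n)/C(K, n) ≥ (1 − t + ⌊t⌋)·C(K-i, ⌊t⌋)/C(K, ⌊t⌋) + (t − ⌊t⌋)·C(K-i, ⌊t⌋+1)/C(K, ⌊t⌋+1), where the second term is interpreted as 0 if t = K. -/
noncomputable def cc (K i n : ℕ) : ℝ := ((K - i).choose n : ℝ) / (K.choose n)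

lemma cc_nonneg (K i n : ℕ) : 0 ≤ cc K i n := by
  unfold cc; positivity

lemma cc_zero_of_gt (K i n : ℕ) (h : K - i < n) : cc K i n = 0 := by
  simp [cc, Nat.choose_eq_zero_of_lt h]

lemma choose_cast_succ (N k : ℕ) (h : k ≤ N) :
    (N.choose (k+1) : ℝ) * (k+1) = (N.choose k : ℝ) * ((N:ℝ) - k) := by
  have h1 := Nat.choose_succ_right_eq N k
  have h2 : ((N - k : ℕ) : ℝ) = (N:ℝ) - k := by
    rw [Nat.cast_sub h]
  calc (N.choose (k+1) : ℝ) * (k+1)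
      = ((N.choose (k+1) * (k+1) : ℕ) : ℝ) := by push_cast; ring
    _ = ((N.choose k * (N - k) : ℕ) : ℝ) := by rw [h1]
    _ = (N.choose k : ℝ) * ((N:ℝ) - k) := by push_cast [h]; ring

lemma cc_succ (K i k : ℕ) (hk : k + 1 ≤ K) (hk2 : k ≤ K - i) (hi : i ≤ K) :
    cc K i (k+1) = cc K i k * ((((K:ℝ) - i) - k) / ((K:ℝ) - k)) := by
  have hKi : ((K - i : ℕ) : ℝ) = (K:ℝ) - i := by rw [Nat.cast_sub hi]
  have hA := choose_cast_succ (K - i) k hk2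
  have hB := choose_cast_succ K k (le_trans (Nat.le_succ k) hk)
  rw [hKi] at hA
  have hb0 : (0:ℝ) < (K.choose k : ℝ) := by
    exact_mod_cast Nat.choose_pos (by omega)
  have hb1 : (0:ℝ) < (K.choose (k+1) : ℝ) := by
    exact_mod_cast Nat.choose_pos hk
  have hKk : (0:ℝ) < (K:ℝ) - k := by
    have : (k:ℝ) + 1 ≤ (K:ℝ) := by exact_mod_cast hk
    linarith
  have hk1 : (0:ℝ) < (k:ℝ) + 1 := by positivity
  have key : ((K-i).choose (k+1) : ℝ) * ((K.choose k : ℝ) * ((K:ℝ) - k))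
      = ((K-i).choose k : ℝ) * (((K:ℝ) - i) - k) * (K.choose (k+1) : ℝ) :=
    mul_right_cancel₀ hk1.ne' (by
      linear_combination ((K.choose k : ℝ) * ((K:ℝ) - (k:ℝ))) * hA
        - (((K-i).choose k : ℝ) * ((K:ℝ) - (i:ℝ) - (k:ℝ))) * hB)
  unfold cc
  rw [div_mul_div_comm, div_eq_div_iff hb1.ne' (mul_pos hb0 hKk).ne']
  linear_combination key

lemma step (K i : ℕ) (hi1 : 1 ≤ i) (hi2 : i ≤ K) (n : ℕ) :
    cc K i (n+1) - cc K i n ≤ cc K i (n+2) - cc K i (n+1) := by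
  rcases le_or_gt (K - i) n with h | h
  · have h1 : cc K i (n+1) = 0 := cc_zero_of_gt _ _ _ (by omega)
    have h2 : cc K i (n+2) = 0 := cc_zero_of_gt _ _ _ (by omega)
    have := cc_nonneg K i n
    linarith
  · -- n + 1 ≤ K - i
    have hn1 : n + 1 ≤ K - i := h
    have hn2 : n + 2 ≤ K := by omega
    have e1 : cc K i (n+1) = cc K i n * ((((K:ℝ) - i) - n) / ((K:ℝ) - n)) :=
      cc_succ K i n (by omega) (by omega) hi2
    have e2 : cc K i (n+2) = cc K i (n+1) * ((((K:ℝ) - i) - (n+1)) / ((K:ℝ) - (n+1))) := by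
      have := cc_succ K i (n+1) (by omega) (by omega) hi2
      rw [this]; push_cast; ring_nf
    set x := cc K i n with hx
    have hxnn : 0 ≤ x := cc_nonneg K i n
    have hu : (2:ℝ) ≤ (K:ℝ) - n := by
      have : (n:ℝ) + 2 ≤ (K:ℝ) := by exact_mod_cast hn2
      linarith
    have hv : (1:ℝ) ≤ ((K:ℝ) - i) - n := by
      have : (n:ℝ) + 1 + i ≤ (K:ℝ) := by exact_mod_cast (by omega : n + 1 + i ≤ K)
      linarith
    have hi' : (1:ℝ) ≤ (i:ℝ) := by exact_mod_cast hi1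
    set u : ℝ := (K:ℝ) - n with hudef
    set v : ℝ := ((K:ℝ) - i) - n with hvdef
    have huv : u - v = (i:ℝ) := by rw [hudef, hvdef]; ring
    have hu1 : (0:ℝ) < u - 1 := by linarith
    have hu0 : (0:ℝ) < u := by linarith
    have key : 0 ≤ (v/u) * ((v-1)/(u-1)) - 2*(v/u) + 1 := by
      have hnum : 0 ≤ v*(v-1) - 2*(v*(u-1)) + u*(u-1) := by
        have h5 : v*(v-1) - 2*(v*(u-1)) + u*(u-1) = (u-v)*(u-v-1) := by ring
        rw [h5]
        apply mul_nonneg <;> [linarith; linarith]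
      have h4 : (v/u) * ((v-1)/(u-1)) - 2*(v/u) + 1
          = (v*(v-1) - 2*(v*(u-1)) + u*(u-1)) / (u*(u-1)) := by
        field_simp
      rw [h4]
      exact div_nonneg hnum (le_of_lt (mul_pos hu0 hu1))
    have e2' : cc K i (n+2) = x * (v/u) * ((v-1)/(u-1)) := by
      rw [e2, e1]; rw [hudef, hvdef]; push_cast; ring_nf
    have e1' : cc K i (n+1) = x * (v/u) := by rw [e1]
    rw [e1', e2']
    nlinarith [mul_nonneg hxnn key]

lemma dmono (K i : ℕ) (hi1 : 1 ≤ i) (hi2 : i ≤ K) :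
    Monotone (fun n => cc K i (n+1) - cc K i n) :=
  monotone_nat_of_le_succ (fun n => step K i hi1 hi2 n)

lemma chord (K i : ℕ) (hi1 : 1 ≤ i) (hi2 : i ≤ K) (m n : ℕ) :
    cc K i m + ((n:ℝ) - m) * (cc K i (m+1) - cc K i m) ≤ cc K i n := by
  set D := cc K i (m+1) - cc K i m with hD
  rcases le_or_gt m n with h | h
  · -- upward induction
    induction n, h using Nat.le_induction with
    | base => simp
    | succ n hmn ih =>
      have hd : D ≤ cc K i (n+1) - cc K i n := dmono K i hi1 hi2 hmn
      push_cast
      push_cast at ih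
      linarith
  · -- downward: n < m
    have key : ∀ k, k ≤ m → cc K i m + (((m - k : ℕ):ℝ) - m) * D ≤ cc K i (m - k) := by
      intro k
      induction k with
      | zero => intro _; simp
      | succ k ih =>
        intro hk1
        have hk : k ≤ m := by omega
        have ihk := ih hk
        have hjk : m - k = m - (k+1) + 1 := by omega
        have hd : cc K i (m - (k+1) + 1) - cc K i (m - (k+1)) ≤ D :=
          dmono K i hi1 hi2 (by omega)
        rw [hjk] at ihk
        have hc2 : ((m - (k+1) : ℕ):ℝ) = (m:ℝ) - k - 1 := by
          rw [Nat.cast_sub hk1]; push_cast; ring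
        have hc1 : ((m - (k+1) + 1 : ℕ):ℝ) = (m:ℝ) - k := by
          push_cast [hc2]; ring
        rw [hc1] at ihk
        rw [hc2]
        linarith
    have := key (m - n) (by omega)
    have hmn : m - (m - n) = n := by omega
    rw [hmn] at this
    exact this

theorem stmt14 (K i : ℕ) (hK : 1 ≤ K) (hi1 : 1 ≤ i) (hi2 : i ≤ K)
    (a : Fin (K + 1) → ℝ) (hnn : ∀ n, 0 ≤ a n) (hsum : ∑ n, a n = 1) :
    (∑ n : Fin (K + 1), a n * (((K - i).choose (n : ℕ) : ℝ) / (K.choose (n : ℕ))))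
      ≥ (1 - (∑ n : Fin (K + 1), (n : ℝ) * a n)
            + (⌊∑ n : Fin (K + 1), (n : ℝ) * a n⌋ : ℝ)) *
          (((K - i).choose (⌊∑ n : Fin (K + 1), (n : ℝ) * a n⌋.toNat) : ℝ) /
            (K.choose (⌊∑ n : Fin (K + 1), (n : ℝ) * a n⌋.toNat)))
        + ((∑ n : Fin (K + 1), (n : ℝ) * a n)
            - (⌊∑ n : Fin (K + 1), (n : ℝ) * a n⌋ : ℝ)) *
          (((K - i).choose (⌊∑ n : Fin (K + 1), (n : ℝ) * a n⌋.toNat + 1) : ℝ) /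
            (K.choose (⌊∑ n : Fin (K + 1), (n : ℝ) * a n⌋.toNat + 1))) := by
  set t : ℝ := ∑ n : Fin (K + 1), (n : ℝ) * a n with ht
  have ht0 : 0 ≤ t := by
    apply Finset.sum_nonneg
    intro n _
    have : (0:ℝ) ≤ (n:ℝ) := by positivity
    exact mul_nonneg this (hnn n)
  set m : ℕ := ⌊t⌋.toNat with hm
  have hfloor : (⌊t⌋ : ℝ) = (m : ℝ) := by
    have h := Int.toNat_of_nonneg (Int.floor_nonneg.2 ht0)
    exact_mod_cast h.symm
  rw [hfloor]
  set C := cc K i m with hC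
  set D := cc K i (m+1) - cc K i m with hD
  have hrhs : (1 - t + (m:ℝ)) * cc K i m + (t - (m:ℝ)) * cc K i (m+1)
      = C + (t - m) * D := by rw [hC, hD]; ring
  have hle : C + (t - m) * D ≤ ∑ n : Fin (K+1), a n * cc K i (n : ℕ) := by
    have pointwise : ∀ n : Fin (K+1),
        a n * (C + (((n:ℕ):ℝ) - m) * D) ≤ a n * cc K i (n:ℕ) := by
      intro n
      exact mul_le_mul_of_nonneg_left (chord K i hi1 hi2 m (n:ℕ)) (hnn n)
    have hsum2 : ∑ n : Fin (K+1), a n * (C + (((n:ℕ):ℝ) - m) * D)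
        = C + (t - m) * D := by
      have expand : ∀ n : Fin (K+1),
          a n * (C + (((n:ℕ):ℝ) - m) * D)
            = a n * (C - (m:ℝ)*D) + ((n:ℝ) * a n) * D := by
        intro n
        have : ((n:ℕ):ℝ) = (n:ℝ) := by norm_cast
        rw [this]; ring
      rw [Finset.sum_congr rfl (fun n _ => expand n)]
      rw [Finset.sum_add_distrib, ← Finset.sum_mul, ← Finset.sum_mul, hsum, ← ht]
      ring
    calc C + (t - m) * D = ∑ n : Fin (K+1), a n * (C + (((n:ℕ):ℝ) - m) * D) := hsum2.symm
      _ ≤ ∑ n : Fin (K+1), a n * cc K i (n:ℕ) := Finset.sum_le_sum (fun n _ => pointwise n)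
  have lhs_eq : (∑ n : Fin (K + 1), a n * (((K - i).choose (n : ℕ) : ℝ) / (K.choose (n : ℕ))))
      = ∑ n : Fin (K+1), a n * cc K i (n : ℕ) := rfl
  rw [ge_iff_le, lhs_eq]
  calc (1 - t + (m:ℝ)) * (((K - i).choose m : ℝ) / (K.choose m))
        + (t - (m:ℝ)) * (((K - i).choose (m+1) : ℝ) / (K.choose (m+1)))
      = C + (t - m) * D := hrhs
    _ ≤ _ := hle
end

section
/- Fix an integer K ≥ 2 and i ∈ {1, 2}. Define J : [0, K] → ℝ by J(x) = (1 − x + ⌊x⌋)·C(K-i,⌊x⌋)/C(K,⌊x⌋) + (x − ⌊x⌋)·C(K-i,⌊x⌋+1)/C(K,⌊x⌋+1) for x ∈ [0, K) and J(K) = C(K-i,K)/C(K,K). Then J is a convex function on [0, K]. -/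
open Finset

private lemma convexOn_affine {s : Set ℝ} (hs : Convex ℝ s) (a b : ℝ) :
    ConvexOn ℝ s (fun x => a * x + b) := by
  refine ⟨hs, fun x _ y _ p q hp hq hpq => le_of_eq ?_⟩
  simp only [smul_eq_mul]
  linear_combination (-b) * hpq

private lemma convexOn_hinge {s : Set ℝ} (hs : Convex ℝ s) (c : ℝ) :
    ConvexOn ℝ s (fun x => max (x - c) 0) := by
  have h := (convexOn_affine hs 1 (-c)).sup (convexOn_const (0 : ℝ) hs)
  refine h.congr fun x _ => ?_
  simp only [Pi.sup_apply, one_mul]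
  ring_nf

private lemma convexOn_finsum {ι : Type*} (t : Finset ι) (f : ι → ℝ → ℝ) {s : Set ℝ}
    (hs : Convex ℝ s) (h : ∀ k ∈ t, ConvexOn ℝ s (f k)) :
    ConvexOn ℝ s (fun x => ∑ k ∈ t, f k x) := by
  classical
  induction t using Finset.induction_on with
  | empty => simpa using convexOn_const (0 : ℝ) hs
  | @insert a t hk ih =>
      simp only [Finset.sum_insert hk]
      exact (h _ (Finset.mem_insert_self _ _)).add
        (ih fun k hk' => h k (Finset.mem_insert_of_mem hk'))

private lemma gauss (n : ℕ) :
    ∑ k ∈ Finset.range n, ((k : ℝ) + 1) = n * (n + 1) / 2 := by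
  induction n with
  | zero => simp
  | succ m ih =>
      rw [Finset.sum_range_succ, ih]
      push_cast
      ring

private lemma ratio1 (K m : ℕ) (hK : 1 ≤ K) (hm : m ≤ K) :
    ((K - 1).choose m : ℝ) / (K.choose m) = ((K : ℝ) - m) / K := by
  have h := Nat.choose_mul_succ_eq (K - 1) m
  rw [Nat.sub_add_cancel hK] at h
  have hc0 : (0 : ℝ) < (K.choose m : ℝ) := by exact_mod_cast Nat.choose_pos hm
  have hK0 : (0 : ℝ) < K := by exact_mod_cast hK
  have hR : ((K - 1).choose m : ℝ) * K = (K.choose m : ℝ) * ((K : ℝ) - m) := by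
    have c := congrArg (Nat.cast : ℕ → ℝ) h
    push_cast [Nat.cast_sub hm] at c
    linarith [c]
  field_simp
  linarith [hR]

private lemma ratio2 (K m : ℕ) (hK : 2 ≤ K) (hm : m ≤ K) :
    ((K - 2).choose m : ℝ) / (K.choose m)
      = ((K : ℝ) - m) * ((K : ℝ) - 1 - m) / ((K : ℝ) * ((K : ℝ) - 1)) := by
  have hc0 : (0 : ℝ) < (K.choose m : ℝ) := by exact_mod_cast Nat.choose_pos hm
  have hKR : (2 : ℝ) ≤ (K : ℝ) := by exact_mod_cast hK
  have hK0 : (0 : ℝ) < K := by linarith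
  have hK1 : (0 : ℝ) < (K : ℝ) - 1 := by linarith
  by_cases h2 : m ≤ K - 2
  · have e1 := Nat.choose_mul_succ_eq (K - 2) m
    have h21 : K - 2 + 1 = K - 1 := by omega
    rw [h21] at e1
    have e2 := Nat.choose_mul_succ_eq (K - 1) m
    rw [Nat.sub_add_cancel (by omega : 1 ≤ K)] at e2
    have hm1 : m ≤ K - 1 := by omega
    have c1 := congrArg (Nat.cast : ℕ → ℝ) e1
    have c2 := congrArg (Nat.cast : ℕ → ℝ) e2
    push_cast [Nat.cast_sub hm1, Nat.cast_sub hm, Nat.cast_sub (show 1 ≤ K by omega)] at c1 c2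
    have E : ((K - 2).choose m : ℝ) * ((K : ℝ) - 1) * K
        = (K.choose m : ℝ) * (((K : ℝ) - m) * ((K : ℝ) - 1 - m)) := by
      linear_combination (K : ℝ) * c1 + ((K : ℝ) - 1 - (m : ℝ)) * c2
    field_simp
    linear_combination E
  · have hz : (K - 2).choose m = 0 := Nat.choose_eq_zero_of_lt (by omega)
    rw [hz]
    have hm' : m = K - 1 ∨ m = K := by omega
    have hnum : ((K : ℝ) - m) * ((K : ℝ) - 1 - m) = 0 := by
      rcases hm' with h | h <;> subst h
      · push_cast [Nat.cast_sub (show 1 ≤ K by omega)]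
        ring
      · ring
    rw [hnum]
    simp

theorem stmt17 (K i : ℕ) (hK : 2 ≤ K) (hi : i = 1 ∨ i = 2) :
    ConvexOn ℝ (Set.Icc (0 : ℝ) K)
      (fun x : ℝ =>
        (1 - x + (⌊x⌋ : ℝ)) *
            (((K - i).choose ⌊x⌋.toNat : ℝ) / (K.choose ⌊x⌋.toNat))
          + (x - (⌊x⌋ : ℝ)) *
            (((K - i).choose (⌊x⌋.toNat + 1) : ℝ) / (K.choose (⌊x⌋.toNat + 1)))) := by
  have hs : Convex ℝ (Set.Icc (0 : ℝ) (K : ℝ)) := convex_Icc _ _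
  have hKR : (2 : ℝ) ≤ (K : ℝ) := by exact_mod_cast hK
  have hK0 : (0 : ℝ) < K := by linarith
  have hK1 : (0 : ℝ) < (K : ℝ) - 1 := by linarith
  rcases hi with hi | hi <;> subst hi
  · -- i = 1 : the function is the affine map x ↦ (K - x)/K
    refine (convexOn_affine hs (-(1 / (K : ℝ))) 1).congr ?_
    rintro x ⟨hx0, hxK⟩
    dsimp only
    have hfl0 : (0 : ℤ) ≤ ⌊x⌋ := Int.floor_nonneg.2 hx0
    have hfl : ((⌊x⌋ : ℤ) : ℝ) = ((⌊x⌋.toNat : ℕ) : ℝ) := by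
      exact_mod_cast (Int.toNat_of_nonneg hfl0).symm
    set n := ⌊x⌋.toNat with hn
    rcases eq_or_lt_of_le hxK with heq | hlt
    · subst heq
      have hnK : n = K := by
        rw [hn]; simp
      have hz : (K - 1).choose K = 0 := Nat.choose_eq_zero_of_lt (by omega)
      rw [hfl, hnK, hz, Nat.choose_self, Nat.cast_zero, Nat.cast_one, zero_div,
        mul_zero, zero_add, sub_self, zero_mul]
      field_simp
      ring
    · have hxlt : ⌊x⌋ < (K : ℤ) := by
        rw [Int.floor_lt]
        exact_mod_cast hlt
      have hnK : n + 1 ≤ K := by omega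
      rw [ratio1 K n (by omega) (by omega), ratio1 K (n + 1) (by omega) hnK, hfl]
      push_cast
      field_simp
      ring
  · -- i = 2
    have hsum : ConvexOn ℝ (Set.Icc (0 : ℝ) (K : ℝ))
        (fun x => ∑ k ∈ Finset.range (K - 1), max (x - ((k : ℝ) + 1)) 0) :=
      convexOn_finsum _ _ hs fun k _ => convexOn_hinge hs _
    have haff := convexOn_affine hs (-(2 * (K : ℝ) - 2)) ((K : ℝ) * ((K : ℝ) - 1))
    have h2s := hsum.smul (show (0 : ℝ) ≤ 2 by norm_num)
    have hin := haff.add h2s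
    have hg := hin.smul (show (0 : ℝ) ≤ 1 / ((K : ℝ) * ((K : ℝ) - 1)) by positivity)
    refine hg.congr ?_
    rintro x ⟨hx0, hxK⟩
    simp only [smul_eq_mul, Pi.add_apply]
    have hfl0 : (0 : ℤ) ≤ ⌊x⌋ := Int.floor_nonneg.2 hx0
    have hfl : ((⌊x⌋ : ℤ) : ℝ) = ((⌊x⌋.toNat : ℕ) : ℝ) := by
      exact_mod_cast (Int.toNat_of_nonneg hfl0).symm
    set n := ⌊x⌋.toNat with hn
    rcases eq_or_lt_of_le hxK with heq | hlt
    · subst heq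
      have hnK : n = K := by rw [hn]; simp
      have hsum_eq : ∑ k ∈ Finset.range (K - 1), max ((K : ℝ) - ((k : ℝ) + 1)) 0
          = (K - 1 : ℕ) * (K : ℝ) - (K - 1 : ℕ) * ((K - 1 : ℕ) + 1) / 2 := by
        rw [Finset.sum_congr rfl fun k hk => max_eq_left ?_]
        · rw [Finset.sum_sub_distrib, Finset.sum_const, Finset.card_range, gauss,
            nsmul_eq_mul]
        · have hk' : k < K - 1 := Finset.mem_range.1 hk
          have : (k : ℝ) + 1 ≤ (K : ℝ) := by
            have : (k : ℝ) + 1 ≤ ((K : ℕ) - 1 : ℕ) := by exact_mod_cast hk'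
            have hc : (((K : ℕ) - 1 : ℕ) : ℝ) = (K : ℝ) - 1 := by
              push_cast [Nat.cast_sub (show 1 ≤ K by omega)]; ring
            linarith [hc ▸ this]
          linarith
      have hc : (((K : ℕ) - 1 : ℕ) : ℝ) = (K : ℝ) - 1 := by
        push_cast [Nat.cast_sub (show 1 ≤ K by omega)]; ring
      have hz : (K - 2).choose K = 0 := Nat.choose_eq_zero_of_lt (by omega)
      rw [hfl, hnK, hsum_eq, hc, hz, Nat.choose_self, Nat.cast_zero, Nat.cast_one,
        zero_div, mul_zero, zero_add, sub_self, zero_mul]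
      field_simp
      ring
    · have hxlt : ⌊x⌋ < (K : ℤ) := by
        rw [Int.floor_lt]
        exact_mod_cast hlt
      have hnK : n + 1 ≤ K := by omega
      have hxlow : ((n : ℕ) : ℝ) ≤ x := by rw [← hfl]; exact Int.floor_le x
      have hxhigh : x < ((n : ℕ) : ℝ) + 1 := by rw [← hfl]; exact Int.lt_floor_add_one x
      have hsub : Finset.range n ⊆ Finset.range (K - 1) :=
        Finset.range_subset_range.2 (by omega)
      have hsum_eq : ∑ k ∈ Finset.range (K - 1), max (x - ((k : ℝ) + 1)) 0
          = (n : ℝ) * x - (n : ℝ) * ((n : ℝ) + 1) / 2 := by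
        rw [← Finset.sum_subset hsub fun k _ hk => max_eq_right ?_]
        · rw [Finset.sum_congr rfl fun k hk => max_eq_left ?_]
          · rw [Finset.sum_sub_distrib, Finset.sum_const, Finset.card_range, gauss,
              nsmul_eq_mul]
          · have hk' : k < n := Finset.mem_range.1 hk
            have : (k : ℝ) + 1 ≤ (n : ℝ) := by exact_mod_cast hk'
            linarith
        · have hk' : n ≤ k := le_of_not_gt (fun h => hk (Finset.mem_range.2 h))
          have : (n : ℝ) ≤ (k : ℝ) := by exact_mod_cast hk'
          linarith
      rw [ratio2 K n hK (by omega), ratio2 K (n + 1) hK hnK, hfl, hsum_eq]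
      push_cast
      field_simp
      ring
end
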